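/- Let G be an r-regular graph (r ≥ 3) with p vertices and adjacency eigenvalues r, λ₂, ..., λ_p. Then the adjacency spectrum of the second iterated line graph L²(G) consists of 4r−6; λ_i + 3r − 6 for i = 2,...,p; 2r−6 with multiplicity p(r−2)/2; and −2 with multiplicity pr(r−2)/2. -/

import Mathlib

open SimpleGraph Matrix Finset

attribute [local instance] Fintype.ofFinite Classical.propDecidable

noncomputable section

/-- Eccentricity of a vertex: maximum distance to any vertex. -/
def ecc {V : Type*} [Fintype V] (G : SimpleGraph V) (v : V) : ℕ :=
  Finset.univ.sup (fun w => G.dist v w)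

/-- Diameter: maximum eccentricity. -/
def gdiam {V : Type*} [Fintype V] (G : SimpleGraph V) : ℕ :=
  Finset.univ.sup (fun v => ecc G v)

/-- The eccentricity matrix. -/
def eccMatrix {V : Type*} [Fintype V] (G : SimpleGraph V) : Matrix V V ℝ :=
  fun u v => if G.dist u v = min (ecc G u) (ecc G v) then (G.dist u v : ℝ) else 0

/-- Join of two graphs. -/
def joinGraph {V₁ V₂ : Type*} (G₁ : SimpleGraph V₁) (G₂ : SimpleGraph V₂) :
    SimpleGraph (V₁ ⊕ V₂) :=
  SimpleGraph.fromRel (fun x y =>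
    match x, y with
    | Sum.inl a, Sum.inl b => G₁.Adj a b
    | Sum.inr a, Sum.inr b => G₂.Adj a b
    | Sum.inl _, Sum.inr _ => True
    | Sum.inr _, Sum.inl _ => False)

/-- Disjoint union of two graphs. -/
def disjUnion {V₁ V₂ : Type*} (G₁ : SimpleGraph V₁) (G₂ : SimpleGraph V₂) :
    SimpleGraph (V₁ ⊕ V₂) :=
  SimpleGraph.fromRel (fun x y =>
    match x, y with
    | Sum.inl a, Sum.inl b => G₁.Adj a b
    | Sum.inr a, Sum.inr b => G₂.Adj a b
    | _, _ => False)

/-- Subdivision-vertex join `G₁ ∨̇ G₂`: take the subdivision of `G₁` (original vertices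
`V₁`, one new vertex for every edge) and join every original vertex of `G₁` to every
vertex of `G₂`. -/
def subVertexJoin {V₁ V₂ : Type*} (G₁ : SimpleGraph V₁) (G₂ : SimpleGraph V₂) :
    SimpleGraph ((V₁ ⊕ G₁.edgeSet) ⊕ V₂) :=
  SimpleGraph.fromRel (fun x y =>
    match x, y with
    | Sum.inl (Sum.inl v), Sum.inl (Sum.inr e) => v ∈ (e : Sym2 V₁)
    | Sum.inl (Sum.inl _), Sum.inr _ => True
    | Sum.inr a, Sum.inr b => G₂.Adj a b
    | _, _ => False)

/-- Subdivision-edge join `G₁ ⊻ G₂`: take the subdivision of `G₁` and join every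
subdivision (inserted) vertex of `G₁` to every vertex of `G₂`. -/
def subEdgeJoin {V₁ V₂ : Type*} (G₁ : SimpleGraph V₁) (G₂ : SimpleGraph V₂) :
    SimpleGraph ((V₁ ⊕ G₁.edgeSet) ⊕ V₂) :=
  SimpleGraph.fromRel (fun x y =>
    match x, y with
    | Sum.inl (Sum.inl v), Sum.inl (Sum.inr e) => v ∈ (e : Sym2 V₁)
    | Sum.inl (Sum.inr _), Sum.inr _ => True
    | Sum.inr a, Sum.inr b => G₂.Adj a b
    | _, _ => False)

/-- Line graph: vertices are edges of `G`, adjacent iff they share an endpoint. -/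
def lineG {V : Type*} (G : SimpleGraph V) : SimpleGraph G.edgeSet :=
  SimpleGraph.fromRel (fun e f => ∃ v, v ∈ (e : Sym2 V) ∧ v ∈ (f : Sym2 V))

/-- Incidence matrix of a graph. -/
def incMat {V : Type*} [Fintype V] (G : SimpleGraph V) : Matrix V G.edgeSet ℝ :=
  fun v e => if v ∈ (e : Sym2 V) then 1 else 0

/-- All-ones matrix. -/
def Jmat (m n : Type*) : Matrix m n ℝ := Matrix.of (fun _ _ => (1 : ℝ))

/-- A symmetric matrix is irreducible iff it is not permutation-similar to a
nontrivial block upper-triangular matrix, i.e. there is no nontrivial vertex split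
with all cross entries zero. -/
def MatIrreducible {n : Type*} (M : Matrix n n ℝ) : Prop :=
  ∀ S : Set n, S.Nonempty → Sᶜ.Nonempty → ∃ u ∈ S, ∃ v ∈ Sᶜ, M u v ≠ 0

/-- `μ` is an eigenvalue of `M`. -/
def IsEigenvalue {n : Type*} [Fintype n] (M : Matrix n n ℝ) (μ : ℝ) : Prop :=
  ∃ v : n → ℝ, v ≠ 0 ∧ M.mulVec v = μ • v

/-- Eigenspace of `M` for `μ`. -/
def eigSpace {n : Type*} [Fintype n] (M : Matrix n n ℝ) (μ : ℝ) :
    Submodule ℝ (n → ℝ) :=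
  LinearMap.ker (M.mulVecLin - μ • LinearMap.id)

/-- Eccentricity energy: sum of absolute values of the eccentricity eigenvalues. -/
def eccEnergy {V : Type*} [Fintype V] (G : SimpleGraph V) : ℝ :=
  ((eccMatrix G).charpoly.roots.map (fun x => |x|)).sum

/-- Eccentricity Wiener index: half the sum of the entries of the eccentricity matrix. -/
def eccWiener {V : Type*} [Fintype V] (G : SimpleGraph V) : ℝ :=
  (∑ u, ∑ v, eccMatrix G u v) / 2

end

section AuxProofs

open Polynomial

lemma aux_eval_charpoly {n : Type*} [Fintype n] [DecidableEq n] (M : Matrix n n ℝ) (x : ℝ) :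
    M.charpoly.eval x = (x • (1 : Matrix n n ℝ) - M).det := by
  rw [Matrix.charpoly, ← Polynomial.coe_evalRingHom, RingHom.map_det]
  congr 1
  ext i j
  by_cases h : i = j <;>
    simp [h, Matrix.charmatrix_apply_eq, Matrix.charmatrix_apply_ne, Matrix.one_apply,
      Matrix.smul_apply, Matrix.sub_apply, Matrix.map_apply]

lemma aux_sylvester {m n : Type*} [Fintype m] [Fintype n] [DecidableEq m] [DecidableEq n]
    (A : Matrix m n ℝ) {y : ℝ} (hy : y ≠ 0) :
    (y • (1 : Matrix n n ℝ) - Aᵀ * A).det * y ^ Fintype.card m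
      = y ^ Fintype.card n * (y • (1 : Matrix m m ℝ) - A * Aᵀ).det := by
  have hinv : Invertible (y • (1 : Matrix m m ℝ)) := by
    refine ⟨y⁻¹ • (1 : Matrix m m ℝ), ?_, ?_⟩ <;>
      simp [smul_smul, inv_mul_cancel₀ hy, mul_inv_cancel₀ hy, one_smul]
  have hinvof : ⅟(y • (1 : Matrix m m ℝ)) = y⁻¹ • (1 : Matrix m m ℝ) :=
    invOf_eq_right_inv (by simp [smul_smul, inv_mul_cancel₀ hy, mul_inv_cancel₀ hy, one_smul])
  have h1 : (Matrix.fromBlocks (y • (1 : Matrix m m ℝ)) A Aᵀ (1 : Matrix n n ℝ)).det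
      = (y • (1 : Matrix m m ℝ) - A * Aᵀ).det := Matrix.det_fromBlocks_one₂₂ _ _ _
  have h2 : (Matrix.fromBlocks (y • (1 : Matrix m m ℝ)) A Aᵀ (1 : Matrix n n ℝ)).det
      = y ^ Fintype.card m * ((1 : Matrix n n ℝ) - y⁻¹ • (Aᵀ * A)).det := by
    rw [Matrix.det_fromBlocks₁₁, hinvof]
    congr 1
    · simp [Matrix.det_smul]
    · congr 2
      rw [Matrix.mul_smul, Matrix.mul_one, Matrix.smul_mul]
  have h3 : (y • (1 : Matrix n n ℝ) - Aᵀ * A).det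
      = y ^ Fintype.card n * ((1 : Matrix n n ℝ) - y⁻¹ • (Aᵀ * A)).det := by
    rw [← Matrix.det_smul, smul_sub, smul_smul, mul_inv_cancel₀ hy, one_smul]
  rw [h3, ← h1, h2]
  ring

lemma aux_roots_comp_X_sub_C (Q : Polynomial ℝ) (c : ℝ) :
    (Q.comp (X - C c)).roots = Q.roots.map (fun x => x + c) := by
  by_cases hQ : Q = 0
  · simp [hQ]
  have hkey : ∀ (p : Polynomial ℝ), (p.comp (X - C c)).comp (X + C c) = p := by
    intro p
    rw [Polynomial.comp_assoc]
    simp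
  have hQc : Q.comp (X - C c) ≠ 0 := by
    intro h
    apply hQ
    have := congrArg (fun p => Polynomial.comp p (X + C c)) h
    simpa [hkey] using this
  have hmult : ∀ a : ℝ, rootMultiplicity a (Q.comp (X - C c)) = rootMultiplicity (a - c) Q := by
    intro a
    apply le_antisymm
    · obtain ⟨k, hk⟩ : ∃ k, k = rootMultiplicity a (Q.comp (X - C c)) := ⟨_, rfl⟩
      rw [← hk, Polynomial.le_rootMultiplicity_iff hQ]
      obtain ⟨u, hu⟩ : (X - C a) ^ k ∣ Q.comp (X - C c) := by
        rw [hk]; exact Polynomial.pow_rootMultiplicity_dvd _ _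
      refine ⟨u.comp (X + C c), ?_⟩
      have h2 := congrArg (fun p => Polynomial.comp p (X + C c)) hu
      simp only [hkey] at h2
      rw [h2, Polynomial.mul_comp, Polynomial.pow_comp, Polynomial.sub_comp, Polynomial.X_comp,
        Polynomial.C_comp]
      congr 2
      rw [map_sub]
      ring
    · obtain ⟨k, hk⟩ : ∃ k, k = rootMultiplicity (a - c) Q := ⟨_, rfl⟩
      rw [← hk, Polynomial.le_rootMultiplicity_iff hQc]
      obtain ⟨u, hu⟩ : (X - C (a - c)) ^ k ∣ Q := by
        rw [hk]; exact Polynomial.pow_rootMultiplicity_dvd _ _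
      refine ⟨u.comp (X - C c), ?_⟩
      rw [hu, Polynomial.mul_comp, Polynomial.pow_comp, Polynomial.sub_comp, Polynomial.X_comp,
        Polynomial.C_comp]
      congr 2
      rw [map_sub]
      ring
  classical
  ext a
  rw [Polynomial.count_roots, hmult]
  have ha : a = (a - c) + c := by ring
  conv_rhs => rw [ha]
  rw [Multiset.count_map_eq_count' (fun x => x + c) _ (add_left_injective c)]
  rw [Polynomial.count_roots]

variable {W : Type*} [Fintype W] (H : SimpleGraph W)

lemma aux_edge_rep (e : H.edgeSet) : ∃ u v, H.Adj u v ∧ (e : Sym2 W) = s(u, v) := by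
  obtain ⟨e, he⟩ := e
  induction e using Sym2.ind with
  | _ u v => exact ⟨u, v, he, rfl⟩

lemma aux_lineG_adj (e f : H.edgeSet) :
    (lineG H).Adj e f ↔ e ≠ f ∧ ∃ v, v ∈ (e : Sym2 W) ∧ v ∈ (f : Sym2 W) := by
  constructor
  · rintro ⟨hne, h | h⟩
    · exact ⟨hne, h⟩
    · exact ⟨hne, by tauto⟩
  · rintro ⟨hne, h⟩
    exact ⟨hne, Or.inl h⟩

lemma aux_transpose_incMat_mul :
    (incMat H)ᵀ * incMat H = (lineG H).adjMatrix ℝ + (2 : ℝ) • 1 := by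
  ext e f
  rw [Matrix.mul_apply]
  simp only [Matrix.transpose_apply, Matrix.add_apply, Matrix.smul_apply, Matrix.one_apply,
    SimpleGraph.adjMatrix_apply]
  have hsum : (∑ v, incMat H v e * incMat H v f)
      = ((Finset.univ.filter (fun v => v ∈ (e : Sym2 W) ∧ v ∈ (f : Sym2 W))).card : ℝ) := by
    rw [← Finset.sum_boole]
    apply Finset.sum_congr rfl
    intro v _
    by_cases h1 : v ∈ (e : Sym2 W) <;> by_cases h2 : v ∈ (f : Sym2 W) <;>
      simp [incMat, h1, h2]
  rw [hsum]
  obtain ⟨u, v, huv, he⟩ := aux_edge_rep H e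
  by_cases hef : e = f
  · subst hef
    rw [if_neg (lineG H).irrefl, if_pos rfl]
    have : (Finset.univ.filter (fun w => w ∈ (e : Sym2 W) ∧ w ∈ (e : Sym2 W))) = {u, v} := by
      ext w
      simp [he, Sym2.mem_iff]
    rw [this, Finset.card_insert_of_notMem (by simp [huv.ne]), Finset.card_singleton]
    norm_num
  · rw [if_neg hef, smul_zero, add_zero]
    by_cases hadj : (lineG H).Adj e f
    · rw [if_pos hadj]
      obtain ⟨-, w, hw1, hw2⟩ := (aux_lineG_adj H e f).mp hadj
      have : (Finset.univ.filter (fun x => x ∈ (e : Sym2 W) ∧ x ∈ (f : Sym2 W))) = {w} := by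
        ext x
        simp only [Finset.mem_filter, Finset.mem_univ, true_and, Finset.mem_singleton]
        constructor
        · rintro ⟨hx1, hx2⟩
          by_contra hxw
          exact hef (Subtype.ext (Sym2.eq_of_ne_mem hxw hx1 hw1 hx2 hw2))
        · rintro rfl; exact ⟨hw1, hw2⟩
      rw [this, Finset.card_singleton]
      norm_num
    · rw [if_neg hadj]
      have : (Finset.univ.filter (fun x => x ∈ (e : Sym2 W) ∧ x ∈ (f : Sym2 W))) = ∅ := by
        ext x
        simp only [Finset.mem_filter, Finset.mem_univ, true_and, Finset.notMem_empty,
          iff_false]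
        rintro ⟨hx1, hx2⟩
        exact hadj ((aux_lineG_adj H e f).mpr ⟨hef, x, hx1, hx2⟩)
      rw [this]
      simp

lemma aux_card_incidence_eq_degree (u : W) :
    (Finset.univ.filter (fun e : H.edgeSet => u ∈ (e : Sym2 W))).card = H.degree u := by
  classical
  rw [← SimpleGraph.card_incidenceFinset_eq_degree]
  refine Finset.card_bij (fun e _ => (e : Sym2 W)) ?_ ?_ ?_
  · intro e he
    simp only [Finset.mem_filter] at he
    rw [SimpleGraph.mem_incidenceFinset]
    exact ⟨e.2, he.2⟩
  · intro e₁ h₁ e₂ h₂ h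
    exact Subtype.ext h
  · intro s hs
    rw [SimpleGraph.mem_incidenceFinset] at hs
    exact ⟨⟨s, hs.1⟩, by simp [hs.2], rfl⟩

lemma aux_incMat_mul_transpose {r : ℕ} (hreg : H.IsRegularOfDegree r) :
    incMat H * (incMat H)ᵀ = H.adjMatrix ℝ + (r : ℝ) • 1 := by
  ext u w
  rw [Matrix.mul_apply]
  simp only [Matrix.transpose_apply, Matrix.add_apply, Matrix.smul_apply, Matrix.one_apply,
    SimpleGraph.adjMatrix_apply]
  have hsum : (∑ e : H.edgeSet, incMat H u e * incMat H w e)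
      = ((Finset.univ.filter
          (fun e : H.edgeSet => u ∈ (e : Sym2 W) ∧ w ∈ (e : Sym2 W))).card : ℝ) := by
    rw [← Finset.sum_boole]
    apply Finset.sum_congr rfl
    intro e _
    by_cases h1 : u ∈ (e : Sym2 W) <;> by_cases h2 : w ∈ (e : Sym2 W) <;>
      simp [incMat, h1, h2]
  rw [hsum]
  by_cases huw : u = w
  · subst huw
    rw [if_neg H.irrefl, if_pos rfl]
    simp only [and_self]
    rw [aux_card_incidence_eq_degree H u, hreg u]
    norm_num
  · rw [if_neg huw, smul_zero, add_zero]
    by_cases hadj : H.Adj u w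
    · rw [if_pos hadj]
      have : (Finset.univ.filter (fun e : H.edgeSet => u ∈ (e : Sym2 W) ∧ w ∈ (e : Sym2 W)))
          = {⟨s(u, w), hadj⟩} := by
        ext e
        simp only [Finset.mem_filter, Finset.mem_univ, true_and, Finset.mem_singleton]
        rw [Sym2.mem_and_mem_iff huw]
        exact ⟨fun h => Subtype.ext h, fun h => by rw [h]⟩
      rw [this, Finset.card_singleton]
      norm_num
    · rw [if_neg hadj]
      have : (Finset.univ.filter (fun e : H.edgeSet => u ∈ (e : Sym2 W) ∧ w ∈ (e : Sym2 W)))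
          = ∅ := by
        ext e
        simp only [Finset.mem_filter, Finset.mem_univ, true_and, Finset.notMem_empty, iff_false]
        intro h
        rw [Sym2.mem_and_mem_iff huw] at h
        apply hadj
        rw [← SimpleGraph.mem_edgeSet, ← h]
        exact e.2
      rw [this]
      simp

lemma aux_lineG_regular {r : ℕ} (hreg : H.IsRegularOfDegree r) :
    (lineG H).IsRegularOfDegree (2 * r - 2) := by
  intro e
  obtain ⟨u, v, huv, he⟩ := aux_edge_rep H e
  classical
  rw [SimpleGraph.degree]
  have hnb : (lineG H).neighborFinset e
      = ((Finset.univ.filter (fun f : H.edgeSet => u ∈ (f : Sym2 W)))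
          ∪ (Finset.univ.filter (fun f : H.edgeSet => v ∈ (f : Sym2 W)))).erase e := by
    ext f
    simp only [SimpleGraph.mem_neighborFinset, Finset.mem_erase, Finset.mem_union,
      Finset.mem_filter, Finset.mem_univ, true_and]
    rw [aux_lineG_adj]
    constructor
    · rintro ⟨hne, w, hw1, hw2⟩
      refine ⟨Ne.symm hne, ?_⟩
      rw [he, Sym2.mem_iff] at hw1
      rcases hw1 with rfl | rfl
      · exact Or.inl hw2
      · exact Or.inr hw2
    · rintro ⟨hne, hu | hv⟩
      · exact ⟨Ne.symm hne, u, by rw [he]; simp, hu⟩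
      · exact ⟨Ne.symm hne, v, by rw [he]; simp, hv⟩
  rw [hnb]
  have hinter : (Finset.univ.filter (fun f : H.edgeSet => u ∈ (f : Sym2 W)))
      ∩ (Finset.univ.filter (fun f : H.edgeSet => v ∈ (f : Sym2 W))) = {e} := by
    ext f
    simp only [Finset.mem_inter, Finset.mem_filter, Finset.mem_univ, true_and,
      Finset.mem_singleton]
    constructor
    · rintro ⟨h1, h2⟩
      apply Subtype.ext
      rw [(Sym2.mem_and_mem_iff huv.ne).mp ⟨h1, h2⟩, he]
    · rintro rfl
      rw [he]
      simp
  have hmem : e ∈ (Finset.univ.filter (fun f : H.edgeSet => u ∈ (f : Sym2 W)))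
      ∪ (Finset.univ.filter (fun f : H.edgeSet => v ∈ (f : Sym2 W))) := by
    simp [he]
  rw [Finset.card_erase_of_mem hmem]
  have hcard := Finset.card_union_add_card_inter
    (Finset.univ.filter (fun f : H.edgeSet => u ∈ (f : Sym2 W)))
    (Finset.univ.filter (fun f : H.edgeSet => v ∈ (f : Sym2 W)))
  rw [hinter, Finset.card_singleton, aux_card_incidence_eq_degree H u,
    aux_card_incidence_eq_degree H v, hreg u, hreg v] at hcard
  omega

lemma aux_handshake {r : ℕ} (hreg : H.IsRegularOfDegree r) :
    2 * Fintype.card H.edgeSet = Fintype.card W * r := by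
  classical
  have h1 := H.sum_degrees_eq_twice_card_edges
  have h2 : Fintype.card H.edgeSet = H.edgeFinset.card :=
    (Set.toFinset_card _).symm
  have h3 : ∑ v : W, H.degree v = Fintype.card W * r := by
    have := Finset.sum_congr rfl (fun v (_ : v ∈ Finset.univ) => hreg v)
    rw [this, Finset.sum_const, Finset.card_univ, smul_eq_mul]
  rw [h2, ← h1, h3]

lemma aux_line_roots {r : ℕ} (hr : 2 ≤ r) (hreg : H.IsRegularOfDegree r) :
    ((lineG H).adjMatrix ℝ).charpoly.roots
      = ((H.adjMatrix ℝ).charpoly.roots).map (fun x => x + ((r : ℝ) - 2))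
        + Multiset.replicate (Fintype.card H.edgeSet - Fintype.card W) (-2 : ℝ) := by
  classical
  set p := Fintype.card W with hp
  set q := Fintype.card H.edgeSet with hq'
  have hq : 2 * q = p * r := aux_handshake H hreg
  have hpq : p ≤ q := by
    have h2p : p * 2 ≤ p * r := Nat.mul_le_mul_left _ hr
    rw [← hq] at h2p
    omega
  set S : Polynomial ℝ := X - C (-2 : ℝ) with hS
  set P := ((lineG H).adjMatrix ℝ).charpoly with hP
  set Q := (H.adjMatrix ℝ).charpoly with hQ
  have key : P * S ^ p = S ^ q * (Q.comp (X - C ((r : ℝ) - 2))) := by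
    apply Polynomial.eq_of_infinite_eval_eq
    refine Set.Infinite.mono ?_ ((Set.finite_singleton (-2 : ℝ)).infinite_compl)
    intro x hx
    have hx2 : x + 2 ≠ 0 := by
      simp only [Set.mem_compl_iff, Set.mem_singleton_iff] at hx
      intro h
      exact hx (by linarith)
    have hSx : S.eval x = x + 2 := by
      simp only [hS, Polynomial.eval_sub, Polynomial.eval_X, Polynomial.eval_C]
      ring
    show (P * S ^ p).eval x = (S ^ q * Q.comp (X - C ((r : ℝ) - 2))).eval x
    rw [Polynomial.eval_mul, Polynomial.eval_mul, Polynomial.eval_pow, Polynomial.eval_pow,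
      Polynomial.eval_comp, hSx]
    have hPev : P.eval x = ((x + 2) • (1 : Matrix H.edgeSet H.edgeSet ℝ)
        - (incMat H)ᵀ * incMat H).det := by
      rw [hP, aux_eval_charpoly]
      congr 1
      rw [aux_transpose_incMat_mul H]
      module
    have hQev : Q.eval ((X - C ((r : ℝ) - 2)).eval x)
        = ((x + 2) • (1 : Matrix W W ℝ) - incMat H * (incMat H)ᵀ).det := by
      rw [Polynomial.eval_sub, Polynomial.eval_X, Polynomial.eval_C, hQ, aux_eval_charpoly]
      congr 1
      rw [aux_incMat_mul_transpose H hreg]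
      module
    rw [hPev, hQev]
    exact aux_sylvester (incMat H) hx2
  have hSne : S ≠ 0 := Polynomial.X_sub_C_ne_zero (-2)
  have key2 : P = S ^ (q - p) * (Q.comp (X - C ((r : ℝ) - 2))) := by
    apply mul_right_cancel₀ (pow_ne_zero p hSne)
    have hsplit : S ^ q = S ^ (q - p) * S ^ p := by
      rw [← pow_add, Nat.sub_add_cancel hpq]
    rw [key, hsplit]
    ring
  have hcomp_ne : Q.comp (X - C ((r : ℝ) - 2)) ≠ 0 := by
    intro h
    apply (Matrix.charpoly_monic ((lineG H).adjMatrix ℝ)).ne_zero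
    rw [← hP, key2, h, mul_zero]
  rw [key2, Polynomial.roots_mul (mul_ne_zero (pow_ne_zero _ hSne) hcomp_ne),
    Polynomial.roots_pow, hS, Polynomial.roots_X_sub_C, Multiset.nsmul_singleton,
    aux_roots_comp_X_sub_C]
  exact add_comm _ _

end AuxProofs

/-- For an `r`-regular graph `G` (`r ≥ 3`) on `p` vertices with adjacency
spectrum `{r} ∪ μ`, the adjacency spectrum of `L²(G)` is `{4r-6} ∪ {λ+3r-6 : λ ∈ μ}
∪ {(2r-6)^(p(r-2)/2)} ∪ {(-2)^(pr(r-2)/2)}`. -/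
theorem stmt14 {V : Type*} [Fintype V] (G : SimpleGraph V) (p r : ℕ)
    (hp : Fintype.card V = p) (hreg : G.IsRegularOfDegree r) (hr : 3 ≤ r)
    (μ : Multiset ℝ)
    (hspec : (G.adjMatrix ℝ).charpoly.roots = (r : ℝ) ::ₘ μ) :
    ((lineG (lineG G)).adjMatrix ℝ).charpoly.roots =
      (4 * (r : ℝ) - 6) ::ₘ
        (μ.map (fun x => x + (3 * (r : ℝ) - 6)) +
          (Multiset.replicate (p * (r - 2) / 2) (2 * (r : ℝ) - 6) +
            Multiset.replicate (p * r * (r - 2) / 2) (-2 : ℝ))) := by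
    classical
  have hr2 : 2 ≤ r := by omega
  have hreg2 := aux_lineG_regular G hreg
  have hr2' : 2 ≤ 2 * r - 2 := by omega
  have h1 := aux_line_roots G hr2 hreg
  have h2 := aux_line_roots (lineG G) hr2' hreg2
  set q := Fintype.card G.edgeSet with hqdef
  set q2 := Fintype.card (lineG G).edgeSet with hq2def
  have hq : 2 * q = p * r := by rw [← hp]; exact aux_handshake G hreg
  have hq2 : 2 * q2 = q * (2 * r - 2) := aux_handshake (lineG G) hreg2
  have e1 : q - Fintype.card V = p * (r - 2) / 2 := by
    rw [hp]
    have d1 : p * (r - 2) + p * 2 = p * r := by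
      rw [← Nat.mul_add]
      congr 1
      omega
    rw [← hq] at d1
    generalize p * (r - 2) = u at d1 ⊢
    omega
  have e2 : q2 - q = p * r * (r - 2) / 2 := by
    have d6 : p * r * (r - 2) = 2 * (q * (r - 2)) := by
      rw [← hq, mul_assoc]
    have d5 : q * (r - 2) + q * 2 = q * r := by
      rw [← Nat.mul_add]
      congr 1
      omega
    have d2 : q * (2 * r - 2) + q * 2 = 2 * (q * r) := by
      rw [← Nat.mul_add, show 2 * r - 2 + 2 = 2 * r from by omega]
      ring
    rw [← hq2] at d2
    rw [d6]
    generalize q * (r - 2) = a at d5 ⊢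
    generalize q * r = b at d5 d2
    omega
  have hcast : ((2 * r - 2 : ℕ) : ℝ) = 2 * (r : ℝ) - 2 := by
    rw [Nat.cast_sub (by omega : 2 ≤ 2 * r)]
    push_cast
    ring
  rw [hspec] at h1
  have hbridge : ∀ (i1 i2 : DecidableRel (lineG G).Adj) (j1 j2 : Fintype ↥G.edgeSet)
      (k1 k2 : DecidableEq ↥G.edgeSet),
      (@Matrix.charpoly ℝ _ _ k1 j1 (@SimpleGraph.adjMatrix ℝ _ (lineG G) i1 _ _)).roots
        = (@Matrix.charpoly ℝ _ _ k2 j2 (@SimpleGraph.adjMatrix ℝ _ (lineG G) i2 _ _)).roots := by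
    intro i1 i2 j1 j2 k1 k2
    congr!
  rw [hbridge _ _ _ _ _ _] at h2
  rw [h1] at h2
  have hbridge2 : ∀ (i1 i2 : DecidableRel (lineG (lineG G)).Adj)
      (j1 j2 : Fintype ↥(lineG G).edgeSet) (k1 k2 : DecidableEq ↥(lineG G).edgeSet),
      (@Matrix.charpoly ℝ _ _ k1 j1 (@SimpleGraph.adjMatrix ℝ _ (lineG (lineG G)) i1 _ _)).roots
        = (@Matrix.charpoly ℝ _ _ k2 j2
            (@SimpleGraph.adjMatrix ℝ _ (lineG (lineG G)) i2 _ _)).roots := by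
    intro i1 i2 j1 j2 k1 k2
    congr!
  rw [hbridge2 _ _ _ _ _ _] at h2
  rw [h2]
  simp only [Multiset.map_add, Multiset.map_cons, Multiset.map_map, Multiset.map_replicate]
  rw [e1, e2, hcast]
  simp only [Multiset.cons_add]
  congr 1
  · ring
  rw [add_assoc]
  congr 1
  · exact Multiset.map_congr rfl (fun x _ => by simp only [Function.comp_apply]; ring)
  congr 1
  · congr 1
    ring
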